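/- Let $v$ be a measurable function on $Q = \Omega \times (0,T)$, let $\sigma, a$ be measurable with $\sigma > 0$ and $\det a > 0$ a.e., let $n \ge 1$, and let $p, q \in (1,\infty)$ satisfy $\frac{n}{p} + \frac{1}{q} = 1$ with $p < q$. Set $\theta = \frac{n+1}{q} \in (0,1)$. Then $\big\| v \cdot \sigma^{1/q} (\det a)^{1/p} \big\|_{L_{p'}^x L_{q'}^t(Q)} \le \big\| v \cdot (\sigma \det a)^{1/(n+1)} \big\|_{L_{(n+1)/n}(Q)}^{\theta} \cdot \big\| v \cdot (\det a)^{1/n} \big\|_{L_{n/(n-1)}^x L_1^t(Q)}^{1-\theta}.$ -/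

import Mathlib

open MeasureTheory ENNReal

/-- Mixed Lebesgue "norm" with exponent `p ∈ [1,∞]` of an `ℝ≥0∞`-valued function. -/
noncomputable def MNorm {α : Type*} [MeasurableSpace α] (p : ℝ≥0∞) (μ : Measure α)
    (f : α → ℝ≥0∞) : ℝ≥0∞ :=
  if p = ∞ then essSup f μ else (∫⁻ a, f a ^ p.toReal ∂μ) ^ (1 / p.toReal)

lemma hpowdiv (X : ℝ≥0∞) (e d : ℝ) : X ^ (e / d) = (X ^ (1 / d)) ^ e := by
  rw [← ENNReal.rpow_mul]; congr 1; ring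

lemma step_le {α : Type*} [MeasurableSpace α] (μ : Measure α) (F H : α → ℝ≥0∞)
    (hF : AEMeasurable F μ) (hH : AEMeasurable H μ)
    {θ r s c : ℝ} (hθ0 : 0 ≤ θ) (hθ1 : θ ≤ 1) (hr : 0 < r) (hs : 0 < s) (hc : 0 < c)
    (hsum : θ * c / r + (1 - θ) * c / s = 1) :
    (∫⁻ x, (F x ^ θ * H x ^ (1 - θ)) ^ c ∂μ) ^ (1 / c)
      ≤ (∫⁻ x, F x ^ r ∂μ) ^ (θ / r) * (∫⁻ x, H x ^ s ∂μ) ^ ((1 - θ) / s) := by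
  have key : ∀ x, (F x ^ θ * H x ^ (1 - θ)) ^ c
      = (F x ^ r) ^ (θ * c / r) * (H x ^ s) ^ ((1 - θ) * c / s) := by
    intro x
    rw [ENNReal.mul_rpow_of_nonneg _ _ hc.le, ← ENNReal.rpow_mul, ← ENNReal.rpow_mul,
      ← ENNReal.rpow_mul, ← ENNReal.rpow_mul]
    congr 2
    · field_simp
    · field_simp
  calc (∫⁻ x, (F x ^ θ * H x ^ (1 - θ)) ^ c ∂μ) ^ (1 / c)
      = (∫⁻ x, (F x ^ r) ^ (θ * c / r) * (H x ^ s) ^ ((1 - θ) * c / s) ∂μ) ^ (1 / c) := by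
        rw [lintegral_congr fun x => key x]
    _ ≤ ((∫⁻ x, F x ^ r ∂μ) ^ (θ * c / r) * (∫⁻ x, H x ^ s ∂μ) ^ ((1 - θ) * c / s)) ^ (1 / c) := by
        refine ENNReal.rpow_le_rpow ?_ (by positivity)
        exact ENNReal.lintegral_mul_norm_pow_le (hF.pow aemeasurable_const)
          (hH.pow aemeasurable_const) (div_nonneg (mul_nonneg hθ0 hc.le) hr.le)
          (div_nonneg (mul_nonneg (by linarith) hc.le) hs.le) hsum
    _ = (∫⁻ x, F x ^ r ∂μ) ^ (θ / r) * (∫⁻ x, H x ^ s ∂μ) ^ ((1 - θ) / s) := by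
        rw [ENNReal.mul_rpow_of_nonneg _ _ (by positivity), ← ENNReal.rpow_mul,
          ← ENNReal.rpow_mul]
        congr 1 <;> · congr 1; field_simp

lemma step_le_top {α : Type*} [MeasurableSpace α] (μ : Measure α) (F H : α → ℝ≥0∞)
    (hF : AEMeasurable F μ)
    {θ r c : ℝ} (hθ0 : 0 < θ) (hθ1 : θ ≤ 1) (hr : 0 < r) (hc : 0 < c)
    (hsum : θ * c = r) :
    (∫⁻ x, (F x ^ θ * H x ^ (1 - θ)) ^ c ∂μ) ^ (1 / c)
      ≤ (∫⁻ x, F x ^ r ∂μ) ^ (θ / r) * (essSup H μ) ^ (1 - θ) := by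
  have h1 : ∀ᵐ x ∂μ, (F x ^ θ * H x ^ (1 - θ)) ^ c ≤ F x ^ r * (essSup H μ) ^ ((1 - θ) * c) := by
    filter_upwards [ae_le_essSup H] with x hx
    rw [ENNReal.mul_rpow_of_nonneg _ _ hc.le, ← ENNReal.rpow_mul, ← ENNReal.rpow_mul, hsum]
    exact mul_le_mul_right (ENNReal.rpow_le_rpow hx (mul_nonneg (by linarith) hc.le)) _
  calc (∫⁻ x, (F x ^ θ * H x ^ (1 - θ)) ^ c ∂μ) ^ (1 / c)
      ≤ (∫⁻ x, F x ^ r * (essSup H μ) ^ ((1 - θ) * c) ∂μ) ^ (1 / c) := by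
        exact ENNReal.rpow_le_rpow (lintegral_mono_ae h1) (by positivity)
    _ = ((∫⁻ x, F x ^ r ∂μ) * (essSup H μ) ^ ((1 - θ) * c)) ^ (1 / c) := by
        rw [lintegral_mul_const'' _ (hF.pow aemeasurable_const)]
    _ = (∫⁻ x, F x ^ r ∂μ) ^ (θ / r) * (essSup H μ) ^ (1 - θ) := by
        rw [ENNReal.mul_rpow_of_nonneg _ _ (by positivity), ← ENNReal.rpow_mul]
        congr 1
        · congr 1
          rw [← hsum]; field_simp
        · congr 1
          field_simp

section MainAux

variable {α β : Type*} [MeasurableSpace α] [MeasurableSpace β]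
    (μ : Measure α) (ν : Measure β) [SFinite ν]
    (f F H : α × β → ℝ≥0∞)

lemma inner_step (hF : Measurable F) (hH : Measurable H)
    {θ q' r : ℝ} (hθ0 : 0 < θ) (hθ1 : θ < 1) (hq' : 0 < q') (hr : 0 < r)
    (heq : ∀ᵐ z ∂μ.prod ν, f z = F z ^ θ * H z ^ (1 - θ))
    (einner : θ * q' / r + (1 - θ) * q' / 1 = 1) :
    ∀ᵐ x ∂μ, (∫⁻ t, f (x, t) ^ q' ∂ν) ^ (1 / q')
      ≤ ((∫⁻ t, F (x, t) ^ r ∂ν) ^ (1 / r)) ^ θ * (∫⁻ t, H (x, t) ∂ν) ^ (1 - θ) := by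
  filter_upwards [Measure.ae_ae_of_ae_prod heq] with x hx
  have h1 : ∫⁻ t, f (x, t) ^ q' ∂ν = ∫⁻ t, (F (x, t) ^ θ * H (x, t) ^ (1 - θ)) ^ q' ∂ν :=
    lintegral_congr_ae (hx.mono fun t ht => by dsimp only; rw [ht])
  rw [h1]
  have h2 := step_le ν (fun t => F (x, t)) (fun t => H (x, t))
    (hF.comp measurable_prodMk_left).aemeasurable
    (hH.comp measurable_prodMk_left).aemeasurable hθ0.le hθ1.le hr one_pos hq' einner
  simp only [ENNReal.rpow_one, div_one] at h2
  rw [hpowdiv _ θ r] at h2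
  exact h2

lemma main_aux (hF : Measurable F) (hH : Measurable H)
    {θ p' q' r s : ℝ} (hθ0 : 0 < θ) (hθ1 : θ < 1) (hp' : 0 < p') (hq' : 0 < q')
    (hr : 0 < r) (hs : 0 < s)
    (heq : ∀ᵐ z ∂μ.prod ν, f z = F z ^ θ * H z ^ (1 - θ))
    (einner : θ * q' / r + (1 - θ) * q' / 1 = 1)
    (eouter : θ * p' / r + (1 - θ) * p' / s = 1) :
    (∫⁻ x, ((∫⁻ t, f (x, t) ^ q' ∂ν) ^ (1 / q')) ^ p' ∂μ) ^ (1 / p')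
      ≤ ((∫⁻ z, F z ^ r ∂μ.prod ν) ^ (1 / r)) ^ θ *
        ((∫⁻ x, (∫⁻ t, H (x, t) ∂ν) ^ s ∂μ) ^ (1 / s)) ^ (1 - θ) := by
  have hmB : Measurable fun x => (∫⁻ t, F (x, t) ^ r ∂ν) ^ (1 / r) :=
    ((hF.pow measurable_const).lintegral_prod_right').pow measurable_const
  have hmC : Measurable fun x => ∫⁻ t, H (x, t) ∂ν := hH.lintegral_prod_right'
  have hinner := inner_step μ ν f F H hF hH hθ0 hθ1 hq' hr heq einner
  have hBr : ∀ x, ((∫⁻ t, F (x, t) ^ r ∂ν) ^ (1 / r)) ^ r = ∫⁻ t, F (x, t) ^ r ∂ν := by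
    intro x
    rw [← ENNReal.rpow_mul, one_div, inv_mul_cancel₀ hr.ne', ENNReal.rpow_one]
  calc (∫⁻ x, ((∫⁻ t, f (x, t) ^ q' ∂ν) ^ (1 / q')) ^ p' ∂μ) ^ (1 / p')
      ≤ (∫⁻ x, (((∫⁻ t, F (x, t) ^ r ∂ν) ^ (1 / r)) ^ θ
          * (∫⁻ t, H (x, t) ∂ν) ^ (1 - θ)) ^ p' ∂μ) ^ (1 / p') :=
        ENNReal.rpow_le_rpow
          (lintegral_mono_ae (hinner.mono fun x hx => ENNReal.rpow_le_rpow hx hp'.le))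
          (by positivity)
    _ ≤ (∫⁻ x, ((∫⁻ t, F (x, t) ^ r ∂ν) ^ (1 / r)) ^ r ∂μ) ^ (θ / r)
          * (∫⁻ x, (∫⁻ t, H (x, t) ∂ν) ^ s ∂μ) ^ ((1 - θ) / s) :=
        step_le μ _ _ hmB.aemeasurable hmC.aemeasurable hθ0.le hθ1.le hr hs hp' eouter
    _ = ((∫⁻ z, F z ^ r ∂μ.prod ν) ^ (1 / r)) ^ θ *
        ((∫⁻ x, (∫⁻ t, H (x, t) ∂ν) ^ s ∂μ) ^ (1 / s)) ^ (1 - θ) := by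
        rw [lintegral_prod _ ((hF.pow measurable_const).aemeasurable),
          hpowdiv _ θ r, hpowdiv _ (1 - θ) s]
        congr 3
        exact lintegral_congr fun x => hBr x

lemma main_aux_top (hF : Measurable F) (hH : Measurable H)
    {θ p' q' r : ℝ} (hθ0 : 0 < θ) (hθ1 : θ < 1) (hp' : 0 < p') (hq' : 0 < q')
    (hr : 0 < r)
    (heq : ∀ᵐ z ∂μ.prod ν, f z = F z ^ θ * H z ^ (1 - θ))
    (einner : θ * q' / r + (1 - θ) * q' / 1 = 1)
    (eouter : θ * p' = r) :
    (∫⁻ x, ((∫⁻ t, f (x, t) ^ q' ∂ν) ^ (1 / q')) ^ p' ∂μ) ^ (1 / p')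
      ≤ ((∫⁻ z, F z ^ r ∂μ.prod ν) ^ (1 / r)) ^ θ *
        (essSup (fun x => ∫⁻ t, H (x, t) ∂ν) μ) ^ (1 - θ) := by
  have hmB : Measurable fun x => (∫⁻ t, F (x, t) ^ r ∂ν) ^ (1 / r) :=
    ((hF.pow measurable_const).lintegral_prod_right').pow measurable_const
  have hinner := inner_step μ ν f F H hF hH hθ0 hθ1 hq' hr heq einner
  have hBr : ∀ x, ((∫⁻ t, F (x, t) ^ r ∂ν) ^ (1 / r)) ^ r = ∫⁻ t, F (x, t) ^ r ∂ν := by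
    intro x
    rw [← ENNReal.rpow_mul, one_div, inv_mul_cancel₀ hr.ne', ENNReal.rpow_one]
  calc (∫⁻ x, ((∫⁻ t, f (x, t) ^ q' ∂ν) ^ (1 / q')) ^ p' ∂μ) ^ (1 / p')
      ≤ (∫⁻ x, (((∫⁻ t, F (x, t) ^ r ∂ν) ^ (1 / r)) ^ θ
          * (∫⁻ t, H (x, t) ∂ν) ^ (1 - θ)) ^ p' ∂μ) ^ (1 / p') :=
        ENNReal.rpow_le_rpow
          (lintegral_mono_ae (hinner.mono fun x hx => ENNReal.rpow_le_rpow hx hp'.le))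
          (by positivity)
    _ ≤ (∫⁻ x, ((∫⁻ t, F (x, t) ^ r ∂ν) ^ (1 / r)) ^ r ∂μ) ^ (θ / r)
          * (essSup (fun x => ∫⁻ t, H (x, t) ∂ν) μ) ^ (1 - θ) :=
        step_le_top μ _ _ hmB.aemeasurable hθ0 hθ1.le hr hp' eouter
    _ = ((∫⁻ z, F z ^ r ∂μ.prod ν) ^ (1 / r)) ^ θ *
        (essSup (fun x => ∫⁻ t, H (x, t) ∂ν) μ) ^ (1 - θ) := by
        rw [lintegral_prod _ ((hF.pow measurable_const).aemeasurable), hpowdiv _ θ r]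
        congr 3
        exact lintegral_congr fun x => hBr x

end MainAux

/-- The key Hölder interpolation step of the Pivotal Lemma: for `n/p + 1/q = 1`,
`1 < p < q < ∞`, `θ = (n+1)/q`,
`‖v σ^{1/q} (det a)^{1/p}‖_{L_{p'}^x L_{q'}^t} ≤
 ‖v (σ det a)^{1/(n+1)}‖_{L_{(n+1)/n}}^θ ‖v (det a)^{1/n}‖_{L_{n/(n-1)}^x L_1^t}^{1-θ}`. -/
theorem stmt_12 {n : ℕ} (hn : 1 ≤ n) (Ω : Set (EuclideanSpace ℝ (Fin n))) (T : ℝ)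
    (p q : ℝ) (hp : 1 < p) (hq : 1 < q) (hpq : (n : ℝ) / p + 1 / q = 1) (hplq : p < q)
    (v σ : EuclideanSpace ℝ (Fin n) × ℝ → ℝ)
    (a : EuclideanSpace ℝ (Fin n) × ℝ → Matrix (Fin n) (Fin n) ℝ)
    (hv : Measurable v) (hσ : Measurable σ) (ha : Measurable fun z => (a z).det)
    (hσpos : ∀ᵐ z ∂((volume.restrict Ω).prod (volume.restrict (Set.Ioo 0 T))), 0 < σ z)
    (hapos : ∀ᵐ z ∂((volume.restrict Ω).prod (volume.restrict (Set.Ioo 0 T))), 0 < (a z).det) :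
    ((n : ℝ) + 1) / q ∈ Set.Ioo (0 : ℝ) 1 ∧
    MNorm (ENNReal.ofReal (p / (p - 1))) (volume.restrict Ω)
      (fun x => MNorm (ENNReal.ofReal (q / (q - 1))) (volume.restrict (Set.Ioo 0 T))
        (fun t => (‖v (x, t)‖₊ : ℝ≥0∞) *
          ENNReal.ofReal (σ (x, t) ^ (1 / q) * (a (x, t)).det ^ (1 / p))))
    ≤ (MNorm (((n : ℝ≥0∞) + 1) / (n : ℝ≥0∞))
          ((volume.restrict Ω).prod (volume.restrict (Set.Ioo 0 T)))
          (fun z => (‖v z‖₊ : ℝ≥0∞) *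
            ENNReal.ofReal ((σ z * (a z).det) ^ (1 / ((n : ℝ) + 1))))) ^ (((n : ℝ) + 1) / q) *
      (MNorm ((n : ℝ≥0∞) / ((n : ℝ≥0∞) - 1)) (volume.restrict Ω)
          (fun x => MNorm 1 (volume.restrict (Set.Ioo 0 T))
            (fun t => (‖v (x, t)‖₊ : ℝ≥0∞) *
              ENNReal.ofReal ((a (x, t)).det ^ (1 / (n : ℝ)))))) ^ (1 - ((n : ℝ) + 1) / q) := by
  have hn0 : (0:ℝ) < n := by exact_mod_cast hn
  have hn1R : (1:ℝ) ≤ n := by exact_mod_cast hn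
  have hp0 : (0:ℝ) < p := by linarith
  have hq0 : (0:ℝ) < q := by linarith
  have hpne : p ≠ 0 := hp0.ne'
  have hqne : q ≠ 0 := hq0.ne'
  have hp1 : (0:ℝ) < p - 1 := by linarith
  have hq1 : (0:ℝ) < q - 1 := by linarith
  have hnne : (n:ℝ) ≠ 0 := hn0.ne'
  have hn1ne : (n:ℝ) + 1 ≠ 0 := by linarith
  have hθ0 : 0 < ((n:ℝ)+1)/q := by positivity
  have hθ1 : ((n:ℝ)+1)/q < 1 := by
    have h1 : (n:ℝ)/q < (n:ℝ)/p := div_lt_div_of_pos_left hn0 hp0 hplq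
    have h2 : ((n:ℝ)+1)/q = (n:ℝ)/q + 1/q := by ring
    have h3 : 1/q < 1/p := by
      rw [div_add_div _ _ hpne hqne] at hpq
      exact one_div_lt_one_div_of_lt hp0 hplq
    rw [h2]; linarith
  refine ⟨⟨hθ0, hθ1⟩, ?_⟩
  have key : (n:ℝ)*q + p = p*q := by
    field_simp at hpq
    linarith
  have hp' : 0 < p/(p-1) := by positivity
  have hq' : 0 < q/(q-1) := by positivity
  have hr : 0 < ((n:ℝ)+1)/(n:ℝ) := by positivity
  have hmv : Measurable fun z : EuclideanSpace ℝ (Fin n) × ℝ => (‖v z‖₊ : ℝ≥0∞) :=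
    hv.nnnorm.coe_nnreal_ennreal
  have hmF : Measurable fun z : EuclideanSpace ℝ (Fin n) × ℝ =>
      (‖v z‖₊ : ℝ≥0∞) * ENNReal.ofReal ((σ z * (a z).det) ^ (1/((n:ℝ)+1))) :=
    hmv.mul ((hσ.mul ha).pow measurable_const).ennreal_ofReal
  have hmH : Measurable fun z : EuclideanSpace ℝ (Fin n) × ℝ =>
      (‖v z‖₊ : ℝ≥0∞) * ENNReal.ofReal ((a z).det ^ (1/(n:ℝ))) :=
    hmv.mul (ha.pow measurable_const).ennreal_ofReal
  have e1 : (1/((n:ℝ)+1)) * (((n:ℝ)+1)/q) = 1/q := by field_simp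
  have e3 : 1/q + (1/(n:ℝ))*(1 - ((n:ℝ)+1)/q) = 1/p := by
    field_simp
    linear_combination -key
  have einner : (((n:ℝ)+1)/q) * (q/(q-1)) / (((n:ℝ)+1)/(n:ℝ))
      + (1 - ((n:ℝ)+1)/q) * (q/(q-1)) / 1 = 1 := by
    field_simp
    ring
  set μ := volume.restrict Ω with hμdef
  set ν := volume.restrict (Set.Ioo (0:ℝ) T) with hνdef
  have heq : ∀ᵐ z ∂μ.prod ν,
      (‖v z‖₊ : ℝ≥0∞) * ENNReal.ofReal (σ z ^ (1/q) * (a z).det ^ (1/p))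
        = ((‖v z‖₊ : ℝ≥0∞) * ENNReal.ofReal ((σ z * (a z).det) ^ (1/((n:ℝ)+1)))) ^ (((n:ℝ)+1)/q)
          * ((‖v z‖₊ : ℝ≥0∞) * ENNReal.ofReal ((a z).det ^ (1/(n:ℝ)))) ^ (1 - ((n:ℝ)+1)/q) := by
    filter_upwards [hσpos, hapos] with z hσz hdz
    have hσ0 : 0 ≤ σ z := hσz.le
    have hd0 : 0 ≤ (a z).det := hdz.le
    have hA0 : 0 ≤ (σ z * (a z).det) ^ (1/((n:ℝ)+1)) :=
      Real.rpow_nonneg (mul_nonneg hσ0 hd0) _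
    have hB0 : 0 ≤ (a z).det ^ (1/(n:ℝ)) := Real.rpow_nonneg hd0 _
    have hθs : ((n:ℝ)+1)/q + (1 - ((n:ℝ)+1)/q) = 1 := by ring
    have h1θ : 0 ≤ 1 - ((n:ℝ)+1)/q := by linarith
    have hreal : ((σ z * (a z).det) ^ (1/((n:ℝ)+1))) ^ (((n:ℝ)+1)/q)
        * ((a z).det ^ (1/(n:ℝ))) ^ (1 - ((n:ℝ)+1)/q)
        = σ z ^ (1/q) * (a z).det ^ (1/p) := by
      rw [← Real.rpow_mul (mul_nonneg hσ0 hd0), ← Real.rpow_mul hd0,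
        Real.mul_rpow hσ0 hd0, e1, mul_assoc, ← Real.rpow_add hdz, e3]
    calc (‖v z‖₊ : ℝ≥0∞) * ENNReal.ofReal (σ z ^ (1/q) * (a z).det ^ (1/p))
        = (‖v z‖₊ : ℝ≥0∞) * ENNReal.ofReal
            (((σ z * (a z).det) ^ (1/((n:ℝ)+1))) ^ (((n:ℝ)+1)/q)
              * ((a z).det ^ (1/(n:ℝ))) ^ (1 - ((n:ℝ)+1)/q)) := by rw [hreal]
      _ = ((‖v z‖₊ : ℝ≥0∞) ^ (((n:ℝ)+1)/q) * (‖v z‖₊ : ℝ≥0∞) ^ (1 - ((n:ℝ)+1)/q))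
            * (ENNReal.ofReal (((σ z * (a z).det) ^ (1/((n:ℝ)+1))) ^ (((n:ℝ)+1)/q))
              * ENNReal.ofReal (((a z).det ^ (1/(n:ℝ))) ^ (1 - ((n:ℝ)+1)/q))) := by
          rw [← ENNReal.rpow_add_of_nonneg _ _ hθ0.le h1θ, hθs, ENNReal.rpow_one,
            ← ENNReal.ofReal_mul (Real.rpow_nonneg hA0 _)]
      _ = ((‖v z‖₊ : ℝ≥0∞) * ENNReal.ofReal ((σ z * (a z).det) ^ (1/((n:ℝ)+1)))) ^ (((n:ℝ)+1)/q)
          * ((‖v z‖₊ : ℝ≥0∞) * ENNReal.ofReal ((a z).det ^ (1/(n:ℝ)))) ^ (1 - ((n:ℝ)+1)/q) := by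
          rw [ENNReal.mul_rpow_of_nonneg _ _ hθ0.le, ENNReal.mul_rpow_of_nonneg _ _ h1θ,
            ENNReal.ofReal_rpow_of_nonneg hA0 hθ0.le, ENNReal.ofReal_rpow_of_nonneg hB0 h1θ]
          ring
  have hRne : (((n:ℝ≥0∞)) + 1) / (n:ℝ≥0∞) ≠ ∞ :=
    (ENNReal.div_lt_top (by simp [ENNReal.add_ne_top, ENNReal.natCast_ne_top])
      (Nat.cast_ne_zero.mpr (by omega))).ne
  have hRtoR : ((((n:ℝ≥0∞)) + 1) / (n:ℝ≥0∞)).toReal = ((n:ℝ)+1)/(n:ℝ) := by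
    rw [ENNReal.toReal_div, ENNReal.toReal_add (ENNReal.natCast_ne_top n) ENNReal.one_ne_top,
      ENNReal.toReal_one, ENNReal.toReal_natCast]
  rcases Nat.lt_or_ge n 2 with h2 | h2
  · -- n = 1
    have hne1 : n = 1 := by omega
    have hcastE : (n:ℝ≥0∞) = 1 := by rw [hne1]; simp
    have hcastR : (n:ℝ) = 1 := by rw [hne1]; simp
    have hSeq : (n:ℝ≥0∞) / ((n:ℝ≥0∞) - 1) = ∞ := by
      rw [hcastE]; simp [ENNReal.div_zero]
    have eouter1 : (((n:ℝ)+1)/q) * (p/(p-1)) = ((n:ℝ)+1)/(n:ℝ) := by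
      rw [hcastR]
      rw [hcastR] at key
      field_simp
      linear_combination key
    simp only [MNorm, hSeq, if_pos rfl, if_neg ENNReal.ofReal_ne_top, if_neg hRne,
      if_neg ENNReal.one_ne_top, ENNReal.toReal_ofReal hp'.le, ENNReal.toReal_ofReal hq'.le,
      ENNReal.toReal_one, ENNReal.rpow_one, one_div_one, hRtoR]
    exact main_aux_top μ ν
      (fun z => (‖v z‖₊ : ℝ≥0∞) * ENNReal.ofReal (σ z ^ (1/q) * (a z).det ^ (1/p)))
      (fun z => (‖v z‖₊ : ℝ≥0∞) * ENNReal.ofReal ((σ z * (a z).det) ^ (1/((n:ℝ)+1))))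
      (fun z => (‖v z‖₊ : ℝ≥0∞) * ENNReal.ofReal ((a z).det ^ (1/(n:ℝ))))
      hmF hmH hθ0 hθ1 hp' hq' hr heq einner eouter1
  · -- n ≥ 2
    have hn2R : (2:ℝ) ≤ n := by exact_mod_cast h2
    have hs : 0 < (n:ℝ)/((n:ℝ)-1) := by
      apply div_pos hn0; linarith
    have hsub : (n:ℝ≥0∞) - 1 = ((n-1 : ℕ) : ℝ≥0∞) := by
      have h : n = (n-1) + 1 := by omega
      calc (n:ℝ≥0∞) - 1 = (((n-1)+1 : ℕ) : ℝ≥0∞) - 1 := by rw [← h]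
        _ = ((n-1 : ℕ) : ℝ≥0∞) + 1 - 1 := by push_cast; ring_nf
        _ = ((n-1 : ℕ) : ℝ≥0∞) := ENNReal.add_sub_cancel_right ENNReal.one_ne_top
    have hSne : (n:ℝ≥0∞) / ((n:ℝ≥0∞) - 1) ≠ ∞ := by
      rw [hsub]
      exact (ENNReal.div_lt_top (ENNReal.natCast_ne_top n) (Nat.cast_ne_zero.mpr (by omega))).ne
    have hStoR : ((n:ℝ≥0∞) / ((n:ℝ≥0∞) - 1)).toReal = (n:ℝ)/((n:ℝ)-1) := by
      rw [hsub, ENNReal.toReal_div, ENNReal.toReal_natCast, ENNReal.toReal_natCast,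
        Nat.cast_sub hn, Nat.cast_one]
    have eouter : (((n:ℝ)+1)/q) * (p/(p-1)) / (((n:ℝ)+1)/(n:ℝ))
        + (1 - ((n:ℝ)+1)/q) * (p/(p-1)) / ((n:ℝ)/((n:ℝ)-1)) = 1 := by
      have h5 : (n:ℝ) - 1 ≠ 0 := by linarith
      field_simp
      linear_combination (-p*(n:ℝ)^2 + (p + p*q - q)*(n:ℝ) + (p*q - q) + (n:ℝ)*p*((n:ℝ)-1) + ((n:ℝ)*q*(1-p) + 1 + q - p*q)) * key
    simp only [MNorm, if_neg hSne, if_neg ENNReal.ofReal_ne_top, if_neg hRne,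
      if_neg ENNReal.one_ne_top, ENNReal.toReal_ofReal hp'.le, ENNReal.toReal_ofReal hq'.le,
      ENNReal.toReal_one, ENNReal.rpow_one, one_div_one, hRtoR, hStoR]
    exact main_aux μ ν
      (fun z => (‖v z‖₊ : ℝ≥0∞) * ENNReal.ofReal (σ z ^ (1/q) * (a z).det ^ (1/p)))
      (fun z => (‖v z‖₊ : ℝ≥0∞) * ENNReal.ofReal ((σ z * (a z).det) ^ (1/((n:ℝ)+1))))
      (fun z => (‖v z‖₊ : ℝ≥0∞) * ENNReal.ofReal ((a z).det ^ (1/(n:ℝ))))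
      hmF hmH hθ0 hθ1 hp' hq' hr hs heq einner eouter
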